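/- In the coalescence setting (G is the coalescence of H₁ and H₂ via the non-isolated vertex x), if G is weak bicritical, then either (H₁ is critical, H₂ is weak bicritical, and x is a critical vertex of H₂) or (H₂ is critical, H₁ is weak bicritical, and x is a critical vertex of H₁). -/

import Mathlib

open SimpleGraph Set

/-- `S` is a dominating set of the induced subgraph of `G` on the vertex set `A`:
`S ⊆ A` and every vertex of `A` is in the closed neighborhood of some vertex of `S`. -/
def IsDomOn {V : Type*} (G : SimpleGraph V) (A S : Set V) : Prop :=
  S ⊆ A ∧ ∀ v ∈ A, ∃ s ∈ S, s = v ∨ G.Adj s v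

/-- The domination number of the induced subgraph of `G` on the vertex set `A`. -/
noncomputable def domNumOn {V : Type*} (G : SimpleGraph V) (A : Set V) : ℕ :=
  sInf {n | ∃ S : Set V, IsDomOn G A S ∧ S.ncard = n}

/-- The domination number of `G`. -/
noncomputable def domNum {V : Type*} (G : SimpleGraph V) : ℕ :=
  domNumOn G Set.univ

/-- `y` is a critical vertex of the induced subgraph of `G` on `A`:
deleting `y` decreases the domination number. -/
def IsCritVertexOn {V : Type*} (G : SimpleGraph V) (A : Set V) (y : V) : Prop :=
  domNumOn G (A \ {y}) < domNumOn G A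

/-- The induced subgraph of `G` on `A` is critical: all its vertices are critical. -/
def CriticalOn {V : Type*} (G : SimpleGraph V) (A : Set V) : Prop :=
  ∀ y ∈ A, IsCritVertexOn G A y

/-- The induced subgraph of `G` on `A` is weak bicritical: no vertex deletion increases the
domination number (`V⁺ = ∅`), and deleting any vertex that keeps the domination number
unchanged (a vertex of `V⁰`) yields a critical graph. -/
def WeakBicriticalOn {V : Type*} (G : SimpleGraph V) (A : Set V) : Prop :=
  (∀ y ∈ A, domNumOn G (A \ {y}) ≤ domNumOn G A) ∧
  (∀ y ∈ A, domNumOn G (A \ {y}) = domNumOn G A → CriticalOn G (A \ {y}))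


set_option linter.unusedSectionVars false

section Helpers
variable {V : Type*} [Fintype V] (G : SimpleGraph V)

lemma isDomOn_self (A : Set V) : IsDomOn G A A :=
  ⟨subset_rfl, fun v hv => ⟨v, hv, Or.inl rfl⟩⟩

lemma domNumOn_exists (A : Set V) : ∃ S, IsDomOn G A S ∧ S.ncard = domNumOn G A := by
  have h : domNumOn G A ∈ {n | ∃ S : Set V, IsDomOn G A S ∧ S.ncard = n} :=
    Nat.sInf_mem ⟨A.ncard, A, isDomOn_self G A, rfl⟩
  exact h

lemma domNumOn_le {A S : Set V} (h : IsDomOn G A S) : domNumOn G A ≤ S.ncard :=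
  Nat.sInf_le ⟨S, h, rfl⟩

lemma card_inter_le {S A B : Set V} (hd : ∀ v, v ∈ A → v ∈ B → False) :
    (S ∩ A).ncard + (S ∩ B).ncard ≤ S.ncard := by
  have hdis : Disjoint (S ∩ A) (S ∩ B) := by
    rw [Set.disjoint_left]; rintro v ⟨hvS, hvA⟩ ⟨_, hvB⟩; exact hd v hvA hvB
  rw [← Set.ncard_union_eq hdis (toFinite _) (toFinite _)]
  exact Set.ncard_le_ncard (fun v hv => by rcases hv with ⟨h,_⟩|⟨h,_⟩ <;> exact h) (toFinite S)

lemma lemU (A B : Set V) : domNumOn G (A ∪ B) ≤ domNumOn G A + domNumOn G B := by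
  obtain ⟨S, hS, hSc⟩ := domNumOn_exists G A
  obtain ⟨T, hT, hTc⟩ := domNumOn_exists G B
  have hdom : IsDomOn G (A ∪ B) (S ∪ T) := by
    refine ⟨union_subset_union hS.1 hT.1, ?_⟩
    rintro v (hv | hv)
    · obtain ⟨s, hs, h⟩ := hS.2 v hv; exact ⟨s, Or.inl hs, h⟩
    · obtain ⟨s, hs, h⟩ := hT.2 v hv; exact ⟨s, Or.inr hs, h⟩
  calc domNumOn G (A ∪ B) ≤ (S ∪ T).ncard := domNumOn_le G hdom
    _ ≤ S.ncard + T.ncard := Set.ncard_union_le S T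
    _ = _ := by rw [hSc, hTc]

lemma lemDel (A : Set V) {y : V} (hy : y ∈ A) :
    domNumOn G A ≤ domNumOn G (A \ {y}) + 1 := by
  obtain ⟨S, hS, hSc⟩ := domNumOn_exists G (A \ {y})
  have hdom : IsDomOn G A (insert y S) := by
    refine ⟨insert_subset hy (hS.1.trans diff_subset), fun v hv => ?_⟩
    by_cases hvy : v = y
    · exact ⟨y, mem_insert _ _, Or.inl hvy.symm⟩
    · obtain ⟨s, hs, h⟩ := hS.2 v ⟨hv, hvy⟩; exact ⟨s, mem_insert_of_mem _ hs, h⟩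
  calc domNumOn G A ≤ (insert y S).ncard := domNumOn_le G hdom
    _ ≤ S.ncard + 1 := Set.ncard_insert_le _ _
    _ = _ := by rw [hSc]

variable {G} {x : V} {W1 W2 : Set V}

lemma lemDhalf (hinter : W1 ∩ W2 = {x})
    (hsep : ∀ a ∈ W1, ∀ b ∈ W2, a ≠ x → b ≠ x → ¬ G.Adj a b)
    {A B S : Set V} (hA : A ⊆ W1) (hB : B ⊆ W2) (hxA : x ∉ A) (hxSB : x ∉ S ∩ B)
    (hS : IsDomOn G (A ∪ B) S) : IsDomOn G A (S ∩ A) := by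
  refine ⟨inter_subset_right, fun v hv => ?_⟩
  obtain ⟨s, hs, h⟩ := hS.2 v (Or.inl hv)
  have hvx : v ≠ x := fun hh => hxA (hh ▸ hv)
  have hsA : s ∈ A := by
    rcases hS.1 hs with h1 | h2
    · exact h1
    · exfalso
      have hsx : s ≠ x := fun hh => hxSB ⟨hh ▸ hs, hh ▸ h2⟩
      rcases h with heq | hadj
      · have : v ∈ W1 ∩ W2 := ⟨hA hv, hB (heq ▸ h2)⟩
        rw [hinter] at this; exact hvx this
      · exact hsep v (hA hv) s (hB h2) hvx hsx hadj.symm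
  exact ⟨s, ⟨hs, hsA⟩, h⟩

lemma lemLhalfA (hinter : W1 ∩ W2 = {x})
    (hsep : ∀ a ∈ W1, ∀ b ∈ W2, a ≠ x → b ≠ x → ¬ G.Adj a b)
    {A B S : Set V} (hA : A ⊆ W1) (hB : B ⊆ W2)
    (hxA : x ∈ A) (hS : IsDomOn G (A ∪ B) S)
    (hx : ∃ s, s ∈ S ∧ s ∈ A ∧ (s = x ∨ G.Adj s x)) : IsDomOn G A (S ∩ A) := by
  obtain ⟨s₀, hs₀S, hs₀A, hs₀⟩ := hx
  refine ⟨inter_subset_right, fun v hv => ?_⟩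
  by_cases hvx : v = x
  · refine ⟨s₀, ⟨hs₀S, hs₀A⟩, ?_⟩; rw [hvx]; exact hs₀
  obtain ⟨s, hs, h⟩ := hS.2 v (Or.inl hv)
  have hsA : s ∈ A := by
    rcases hS.1 hs with h1 | h2
    · exact h1
    · by_cases hsx : s = x
      · exact hsx ▸ hxA
      · exfalso
        rcases h with heq | hadj
        · have : v ∈ W1 ∩ W2 := ⟨hA hv, hB (heq ▸ h2)⟩
          rw [hinter] at this; exact hvx this
        · exact hsep v (hA hv) s (hB h2) hvx hsx hadj.symm
  exact ⟨s, ⟨hs, hsA⟩, h⟩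

lemma lemLhalfB (hinter : W1 ∩ W2 = {x})
    (hsep : ∀ a ∈ W1, ∀ b ∈ W2, a ≠ x → b ≠ x → ¬ G.Adj a b)
    {A B S : Set V} (hA : A ⊆ W1) (hB : B ⊆ W2)
    (hxB : x ∈ B) (hS : IsDomOn G (A ∪ B) S) : IsDomOn G B (insert x (S ∩ B)) := by
  refine ⟨insert_subset hxB inter_subset_right, fun v hv => ?_⟩
  by_cases hvx : v = x
  · exact ⟨x, mem_insert _ _, Or.inl hvx.symm⟩
  obtain ⟨s, hs, h⟩ := hS.2 v (Or.inr hv)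
  by_cases hsx : s = x
  · exact ⟨x, mem_insert _ _, hsx ▸ h⟩
  have hsB : s ∈ B := by
    rcases hS.1 hs with h1 | h2
    · exfalso
      rcases h with heq | hadj
      · have : v ∈ W1 ∩ W2 := ⟨hA (heq ▸ h1), hB hv⟩
        rw [hinter] at this; exact hvx this
      · exact hsep s (hA h1) v (hB hv) hsx hvx hadj
    · exact h2
  exact ⟨s, mem_insert_of_mem _ ⟨hs, hsB⟩, h⟩

lemma lemD (hinter : W1 ∩ W2 = {x})
    (hsep : ∀ a ∈ W1, ∀ b ∈ W2, a ≠ x → b ≠ x → ¬ G.Adj a b)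
    {A B : Set V} (hA : A ⊆ W1) (hB : B ⊆ W2) (hxA : x ∉ A) (hxB : x ∉ B) :
    domNumOn G A + domNumOn G B ≤ domNumOn G (A ∪ B) := by
  obtain ⟨S, hS, hSc⟩ := domNumOn_exists G (A ∪ B)
  have hinter' : W2 ∩ W1 = {x} := by rw [inter_comm]; exact hinter
  have hsep' : ∀ a ∈ W2, ∀ b ∈ W1, a ≠ x → b ≠ x → ¬ G.Adj a b :=
    fun a ha b hb hax hbx hadj => hsep b hb a ha hbx hax hadj.symm
  have hS' : IsDomOn G (B ∪ A) S := by rwa [union_comm]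
  have h1 := domNumOn_le G (lemDhalf hinter hsep hA hB hxA (fun h => hxB h.2) hS)
  have h2 := domNumOn_le G (lemDhalf hinter' hsep' hB hA hxB (fun h => hxA h.2) hS')
  have hcard : (S ∩ A).ncard + (S ∩ B).ncard ≤ S.ncard := by
    refine card_inter_le fun v hvA hvB => ?_
    have : v ∈ W1 ∩ W2 := ⟨hA hvA, hB hvB⟩
    rw [hinter] at this; exact hxA (this ▸ hvA)
  omega

lemma lemLaux (hinter : W1 ∩ W2 = {x})
    (hsep : ∀ a ∈ W1, ∀ b ∈ W2, a ≠ x → b ≠ x → ¬ G.Adj a b)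
    {A B S : Set V} (hA : A ⊆ W1) (hB : B ⊆ W2) (hxA : x ∈ A) (hxB : x ∈ B)
    (hS : IsDomOn G (A ∪ B) S)
    (hor : ∃ s, s ∈ S ∧ s ∈ A ∧ (s = x ∨ G.Adj s x)) :
    domNumOn G A + domNumOn G B ≤ S.ncard + 1 := by
  have h1 := domNumOn_le G (lemLhalfA hinter hsep hA hB hxA hS hor)
  have h2 := domNumOn_le G (lemLhalfB hinter hsep hA hB hxB hS)
  have heq : insert x (S ∩ B) = insert x (S ∩ (B \ {x})) := by
    ext v
    simp only [mem_insert_iff, mem_inter_iff, mem_diff, mem_singleton_iff]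
    tauto
  have h3 : (insert x (S ∩ (B \ {x}))).ncard ≤ (S ∩ (B \ {x})).ncard + 1 :=
    Set.ncard_insert_le _ _
  have h4 : (S ∩ A).ncard + (S ∩ (B \ {x})).ncard ≤ S.ncard := by
    refine card_inter_le fun v hvA hvB => ?_
    have : v ∈ W1 ∩ W2 := ⟨hA hvA, hB hvB.1⟩
    rw [hinter] at this; exact hvB.2 this
  rw [heq] at h2
  omega

lemma lemL (hinter : W1 ∩ W2 = {x})
    (hsep : ∀ a ∈ W1, ∀ b ∈ W2, a ≠ x → b ≠ x → ¬ G.Adj a b)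
    {A B : Set V} (hA : A ⊆ W1) (hB : B ⊆ W2) (hxA : x ∈ A) (hxB : x ∈ B) :
    domNumOn G A + domNumOn G B ≤ domNumOn G (A ∪ B) + 1 := by
  obtain ⟨S, hS, hSc⟩ := domNumOn_exists G (A ∪ B)
  obtain ⟨s, hs, hdom⟩ := hS.2 x (Or.inl hxA)
  rcases hS.1 hs with hsA | hsB
  · have := lemLaux hinter hsep hA hB hxA hxB hS ⟨s, hs, hsA, hdom⟩
    omega
  · have hinter' : W2 ∩ W1 = {x} := by rw [inter_comm]; exact hinter
    have hsep' : ∀ a ∈ W2, ∀ b ∈ W1, a ≠ x → b ≠ x → ¬ G.Adj a b :=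
      fun a ha b hb hax hbx hadj => hsep b hb a ha hbx hax hadj.symm
    have hS' : IsDomOn G (B ∪ A) S := by rwa [union_comm]
    have := lemLaux hinter' hsep' hB hA hxB hxA hS' ⟨s, hs, hsB, hdom⟩
    omega

end Helpers

section Claim
variable {V : Type*} [Fintype V] {G : SimpleGraph V} {x : V} {W1 W2 : Set V}

lemma claimC1 (hunion : W1 ∪ W2 = univ) (hinter : W1 ∩ W2 = {x})
    (hsep : ∀ a ∈ W1, ∀ b ∈ W2, a ≠ x → b ≠ x → ¬ G.Adj a b)
    {y : V} (hy1 : y ∈ W1) (hyx : y ≠ x)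
    (harith : domNumOn G univ + 1 = domNumOn G W1 + domNumOn G W2)
    (hlt : domNumOn G (univ \ {y}) < domNumOn G univ) :
    domNumOn G (W1 \ {y}) < domNumOn G W1 := by
  have hxm : x ∈ W1 ∩ W2 := by rw [hinter]; exact rfl
  have hx1 : x ∈ W1 := hxm.1
  have hx2 : x ∈ W2 := hxm.2
  have hmem : ∀ v, v ∈ W1 ∨ v ∈ W2 := fun v => by
    have : v ∈ W1 ∪ W2 := by rw [hunion]; exact mem_univ v
    exact this
  have hyW2 : y ∉ W2 := fun h => hyx (by
    have : y ∈ W1 ∩ W2 := ⟨hy1, h⟩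
    rw [hinter] at this; exact this)
  have idU : univ \ {y} = (W1 \ {y}) ∪ W2 := by
    ext v
    simp only [mem_diff, mem_union, mem_singleton_iff, mem_univ, true_and]
    constructor
    · intro hv
      rcases hmem v with h | h
      · exact Or.inl ⟨h, hv⟩
      · exact Or.inr h
    · rintro (⟨_, hv⟩ | hv)
      · exact hv
      · exact fun hh => hyW2 (hh ▸ hv)
  obtain ⟨S, hS, hSc⟩ := domNumOn_exists G (univ \ {y})
  rw [idU] at hS
  have hxA : x ∈ W1 \ {y} := ⟨hx1, fun h => hyx (mem_singleton_iff.1 h).symm⟩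
  have hSlt : S.ncard + 1 ≤ domNumOn G univ := by omega
  by_cases hxS : x ∈ S
  · have hle := lemLaux hinter hsep diff_subset subset_rfl hxA hx2 hS
      ⟨x, hxS, hxA, Or.inl rfl⟩
    omega
  · obtain ⟨s, hs, hdom⟩ := hS.2 x (Or.inl hxA)
    have hsx : s ≠ x := fun h => hxS (h ▸ hs)
    have hadj : G.Adj s x := by rcases hdom with h | h; exact absurd h hsx; exact h
    rcases hS.1 hs with hsA | hsB
    · have hle := lemLaux hinter hsep diff_subset subset_rfl hxA hx2 hS ⟨s, hs, hsA, hdom⟩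
      omega
    · -- dominator of x on the W2 side
      have hinter' : W2 ∩ W1 = {x} := by rw [inter_comm]; exact hinter
      have hsep' : ∀ a ∈ W2, ∀ b ∈ W1, a ≠ x → b ≠ x → ¬ G.Adj a b :=
        fun a ha b hb hax hbx h => hsep b hb a ha hbx hax h.symm
      have idU2 : ((W1 \ {y}) \ {x}) ∪ W2 = (W1 \ {y}) ∪ W2 := by
        ext v
        simp only [mem_union, mem_diff, mem_singleton_iff]
        constructor
        · rintro (⟨h, _⟩ | h)
          · exact Or.inl h
          · exact Or.inr h
        · rintro (h | h)
          · by_cases hvx : v = x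
            · exact Or.inr (hvx ▸ hx2)
            · exact Or.inl ⟨h, hvx⟩
          · exact Or.inr h
      have hS2 : IsDomOn G (((W1 \ {y}) \ {x}) ∪ W2) S := by rwa [idU2]
      have hxnot : x ∉ (W1 \ {y}) \ {x} := fun h => h.2 rfl
      have hxnot2 : x ∉ S ∩ W2 := fun h => hxS h.1
      have hd1 := domNumOn_le G (lemDhalf hinter hsep (diff_subset.trans diff_subset)
        subset_rfl hxnot hxnot2 hS2)
      have hS3 : IsDomOn G (W2 ∪ (W1 \ {y})) S := by rwa [union_comm]
      have hd2 := domNumOn_le G (lemLhalfA hinter' hsep' subset_rfl diff_subset hx2 hS3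
        ⟨s, hs, hsB, Or.inr hadj⟩)
      have hcard : (S ∩ ((W1 \ {y}) \ {x})).ncard + (S ∩ W2).ncard ≤ S.ncard := by
        refine card_inter_le fun v hvA hvB => ?_
        have : v ∈ W1 ∩ W2 := ⟨hvA.1.1, hvB⟩
        rw [hinter] at this
        exact hvA.2 this
      have hdel := lemDel G (W1 \ {y}) (y := x) hxA
      omega

end Claim

lemma critToWB {V : Type*} {G : SimpleGraph V} {A : Set V} (h : CriticalOn G A) :
    WeakBicriticalOn G A :=
  ⟨fun y hy => le_of_lt (h y hy), fun y hy heq => absurd heq (ne_of_lt (h y hy))⟩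

/-- Coalescence: if G is weak bicritical, then for some i, Hᵢ is critical, H₃₋ᵢ is weak
bicritical, and x is a critical vertex of H₃₋ᵢ. -/
theorem stmt_11 {V : Type*} [Fintype V] (G : SimpleGraph V) (x : V) (V1 V2 : Set V)
    (hunion : V1 ∪ V2 = Set.univ) (hinter : V1 ∩ V2 = {x})
    (hsep : ∀ a ∈ V1, ∀ b ∈ V2, a ≠ x → b ≠ x → ¬ G.Adj a b)
    (hx1 : ∃ a ∈ V1, G.Adj x a) (hx2 : ∃ b ∈ V2, G.Adj x b)
    (hwb : WeakBicriticalOn G Set.univ) :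
    (CriticalOn G V1 ∧ WeakBicriticalOn G V2 ∧ IsCritVertexOn G V2 x) ∨
      (CriticalOn G V2 ∧ WeakBicriticalOn G V1 ∧ IsCritVertexOn G V1 x) := by
  classical
  have hxm : x ∈ V1 ∩ V2 := by rw [hinter]; exact rfl
  have hx1V : x ∈ V1 := hxm.1
  have hx2V : x ∈ V2 := hxm.2
  have hmem : ∀ v, v ∈ V1 ∨ v ∈ V2 := fun v => by
    have : v ∈ V1 ∪ V2 := by rw [hunion]; exact mem_univ v
    exact this
  have hinter2 : V2 ∩ V1 = {x} := by rw [inter_comm]; exact hinter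
  have hunion2 : V2 ∪ V1 = Set.univ := by rw [union_comm]; exact hunion
  have hsep2 : ∀ a ∈ V2, ∀ b ∈ V1, a ≠ x → b ≠ x → ¬ G.Adj a b :=
    fun a ha b hb hax hbx h => hsep b hb a ha hbx hax h.symm
  obtain ⟨u1, hu1V, hu1adj⟩ := hx1
  obtain ⟨u2, hu2V, hu2adj⟩ := hx2
  have hu1x : u1 ≠ x := fun h => G.loopless.irrefl x (h ▸ hu1adj)
  have hu2x : u2 ≠ x := fun h => G.loopless.irrefl x (h ▸ hu2adj)
  have hnotin2 : ∀ v ∈ V1, v ≠ x → v ∉ V2 := fun v hv hvx h =>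
    hvx (by have : v ∈ V1 ∩ V2 := ⟨hv, h⟩; rw [hinter] at this; exact this)
  have hnotin1 : ∀ v ∈ V2, v ≠ x → v ∉ V1 := fun v hv hvx h =>
    hvx (by have : v ∈ V1 ∩ V2 := ⟨h, hv⟩; rw [hinter] at this; exact this)
  -- set identities
  have idX : (Set.univ \ {x} : Set V) = (V1 \ {x}) ∪ (V2 \ {x}) := by
    ext v; have hv := hmem v
    simp only [mem_diff, mem_union, mem_univ, mem_singleton_iff, true_and]
    tauto
  have idU1 : (V1 \ {x}) ∪ V2 = (Set.univ : Set V) := by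
    ext v; have hv := hmem v
    have h' : v = x → v ∈ V2 := fun h => h ▸ hx2V
    simp only [mem_diff, mem_union, mem_univ, mem_singleton_iff, iff_true]
    tauto
  have idU2 : V1 ∪ (V2 \ {x}) = (Set.univ : Set V) := by
    ext v; have hv := hmem v
    have h' : v = x → v ∈ V1 := fun h => h ▸ hx1V
    simp only [mem_diff, mem_union, mem_univ, mem_singleton_iff, iff_true]
    tauto
  have idXu1 : (Set.univ \ {x} : Set V) \ {u1} = ((V1 \ {x}) \ {u1}) ∪ (V2 \ {x}) := by
    ext v; have hv := hmem v
    have h' : v = u1 → v ∉ V2 := fun h hh => (hnotin2 u1 hu1V hu1x) (h ▸ hh)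
    simp only [mem_diff, mem_union, mem_univ, mem_singleton_iff, true_and]
    tauto
  have idXu2 : (Set.univ \ {x} : Set V) \ {u2} = (V1 \ {x}) ∪ ((V2 \ {x}) \ {u2}) := by
    ext v; have hv := hmem v
    have h' : v = u2 → v ∉ V1 := fun h hh => (hnotin1 u2 hu2V hu2x) (h ▸ hh)
    simp only [mem_diff, mem_union, mem_univ, mem_singleton_iff, true_and]
    tauto
  have idAx : ∀ y ∈ V1, y ≠ x → (Set.univ \ {y} : Set V) \ {x} =
      ((V1 \ {y}) \ {x}) ∪ (V2 \ {x}) := by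
    intro y hy hyx
    ext v; have hv := hmem v
    have h' : v = y → v ∉ V2 := fun h hh => (hnotin2 y hy hyx) (h ▸ hh)
    simp only [mem_diff, mem_union, mem_univ, mem_singleton_iff, true_and]
    tauto
  have idBx : ∀ z ∈ V2, z ≠ x → (Set.univ \ {z} : Set V) \ {x} =
      (V1 \ {x}) ∪ ((V2 \ {z}) \ {x}) := by
    intro z hz hzx
    ext v; have hv := hmem v
    have h' : v = z → v ∉ V1 := fun h hh => (hnotin1 z hz hzx) (h ▸ hh)
    simp only [mem_diff, mem_union, mem_univ, mem_singleton_iff, true_and]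
    tauto
  have idAw : ∀ y ∈ V1, y ≠ x → ∀ w ∈ V1, w ≠ x → (Set.univ \ {y} : Set V) \ {w} =
      ((V1 \ {y}) \ {w}) ∪ V2 := by
    intro y hy hyx w hw hwx
    ext v; have hv := hmem v
    have h' : v = y → v ∉ V2 := fun h hh => (hnotin2 y hy hyx) (h ▸ hh)
    have h'' : v = w → v ∉ V2 := fun h hh => (hnotin2 w hw hwx) (h ▸ hh)
    simp only [mem_diff, mem_union, mem_univ, mem_singleton_iff, true_and]
    tauto
  have idBw : ∀ z ∈ V2, z ≠ x → ∀ w ∈ V2, w ≠ x → (Set.univ \ {z} : Set V) \ {w} =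
      V1 ∪ ((V2 \ {z}) \ {w}) := by
    intro z hz hzx w hw hwx
    ext v; have hv := hmem v
    have h' : v = z → v ∉ V1 := fun h hh => (hnotin1 z hz hzx) (h ▸ hh)
    have h'' : v = w → v ∉ V1 := fun h hh => (hnotin1 w hw hwx) (h ▸ hh)
    simp only [mem_diff, mem_union, mem_univ, mem_singleton_iff, true_and]
    tauto
  have idAB : ∀ y ∈ V1, y ≠ x → ∀ z ∈ V2, z ≠ x → (Set.univ \ {z} : Set V) \ {y} =
      (V1 \ {y}) ∪ (V2 \ {z}) := by
    intro y hy hyx z hz hzx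
    ext v; have hv := hmem v
    have h' : v = y → v ∉ V2 := fun h hh => (hnotin2 y hy hyx) (h ▸ hh)
    have h'' : v = z → v ∉ V1 := fun h hh => (hnotin1 z hz hzx) (h ▸ hh)
    simp only [mem_diff, mem_union, mem_univ, mem_singleton_iff, true_and]
    tauto
  -- basic numeric facts
  have hxnV1 : x ∉ V1 \ {x} := fun h => h.2 rfl
  have hxnV2 : x ∉ V2 \ {x} := fun h => h.2 rfl
  have hgxU : domNumOn G (Set.univ \ {x}) ≤ domNumOn G (V1 \ {x}) + domNumOn G (V2 \ {x}) := by
    rw [idX]; exact lemU G _ _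
  have hgxL : domNumOn G (V1 \ {x}) + domNumOn G (V2 \ {x}) ≤ domNumOn G (Set.univ \ {x}) := by
    have := lemD hinter hsep (A := V1 \ {x}) (B := V2 \ {x}) diff_subset diff_subset hxnV1 hxnV2
    rwa [← idX] at this
  have h1 : domNumOn G V1 + domNumOn G V2 ≤ domNumOn G Set.univ + 1 := by
    have := lemL hinter hsep (A := V1) (B := V2) subset_rfl subset_rfl hx1V hx2V
    rwa [hunion] at this
  have h2 : domNumOn G Set.univ ≤ domNumOn G (V1 \ {x}) + domNumOn G V2 := by
    have := lemU G (V1 \ {x}) V2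
    rwa [idU1] at this
  have h2' : domNumOn G Set.univ ≤ domNumOn G V1 + domNumOn G (V2 \ {x}) := by
    have := lemU G V1 (V2 \ {x})
    rwa [idU2] at this
  have h3 : domNumOn G V1 ≤ domNumOn G (V1 \ {x}) + 1 := lemDel G V1 hx1V
  have h3' : domNumOn G V2 ≤ domNumOn G (V2 \ {x}) + 1 := lemDel G V2 hx2V
  have h5 : domNumOn G (Set.univ \ {x}) ≤ domNumOn G Set.univ := hwb.1 x (mem_univ x)
  -- rule out x being a zero vertex
  have h6 : domNumOn G (Set.univ \ {x}) ≠ domNumOn G Set.univ := by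
    intro heq
    have hcrit := hwb.2 x (mem_univ x) heq
    have hu1m : u1 ∈ (Set.univ \ {x} : Set V) := ⟨mem_univ u1, hu1x⟩
    have hu2m : u2 ∈ (Set.univ \ {x} : Set V) := ⟨mem_univ u2, hu2x⟩
    have hc1 : domNumOn G ((Set.univ \ {x} : Set V) \ {u1}) < domNumOn G (Set.univ \ {x}) :=
      hcrit u1 hu1m
    have hc2 : domNumOn G ((Set.univ \ {x} : Set V) \ {u2}) < domNumOn G (Set.univ \ {x}) :=
      hcrit u2 hu2m
    have hxn1 : x ∉ (V1 \ {x}) \ {u1} := fun h => h.1.2 rfl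
    have hxn2 : x ∉ (V2 \ {x}) \ {u2} := fun h => h.1.2 rfl
    have hL1 : domNumOn G ((V1 \ {x}) \ {u1}) + domNumOn G (V2 \ {x}) ≤
        domNumOn G ((Set.univ \ {x} : Set V) \ {u1}) := by
      have := lemD hinter hsep (A := (V1 \ {x}) \ {u1}) (B := V2 \ {x})
        (diff_subset.trans diff_subset) diff_subset hxn1 hxnV2
      rwa [← idXu1] at this
    have hL2 : domNumOn G (V1 \ {x}) + domNumOn G ((V2 \ {x}) \ {u2}) ≤
        domNumOn G ((Set.univ \ {x} : Set V) \ {u2}) := by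
      have := lemD hinter hsep (A := V1 \ {x}) (B := (V2 \ {x}) \ {u2})
        diff_subset (diff_subset.trans diff_subset) hxnV1 hxn2
      rwa [← idXu2] at this
    obtain ⟨D1, hD1, hD1c⟩ := domNumOn_exists G ((V1 \ {x}) \ {u1})
    obtain ⟨D2, hD2, hD2c⟩ := domNumOn_exists G ((V2 \ {x}) \ {u2})
    have hdom : IsDomOn G Set.univ (insert x (D1 ∪ D2)) := by
      refine ⟨subset_univ _, fun v _ => ?_⟩
      by_cases hvx : v = x
      · exact ⟨x, mem_insert _ _, Or.inl hvx.symm⟩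
      by_cases hv1 : v = u1
      · exact ⟨x, mem_insert _ _, Or.inr (hv1 ▸ hu1adj)⟩
      by_cases hv2 : v = u2
      · exact ⟨x, mem_insert _ _, Or.inr (hv2 ▸ hu2adj)⟩
      rcases hmem v with h | h
      · obtain ⟨s, hs, hd⟩ := hD1.2 v ⟨⟨h, hvx⟩, hv1⟩
        exact ⟨s, mem_insert_of_mem _ (Or.inl hs), hd⟩
      · obtain ⟨s, hs, hd⟩ := hD2.2 v ⟨⟨h, hvx⟩, hv2⟩
        exact ⟨s, mem_insert_of_mem _ (Or.inr hs), hd⟩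
    have hgle := domNumOn_le G hdom
    have hcard : (insert x (D1 ∪ D2)).ncard ≤ D1.ncard + D2.ncard + 1 := by
      have hins := Set.ncard_insert_le x (D1 ∪ D2)
      have huni := Set.ncard_union_le D1 D2
      omega
    omega
  have h7 : domNumOn G (Set.univ \ {x}) + 1 ≤ domNumOn G Set.univ := by omega
  have hb2 : domNumOn G V2 = domNumOn G (V2 \ {x}) + 1 := by omega
  have ha2 : domNumOn G V1 = domNumOn G (V1 \ {x}) + 1 := by omega
  have hg2 : domNumOn G Set.univ + 1 = domNumOn G V1 + domNumOn G V2 := by omega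
  have xcrit1 : IsCritVertexOn G V1 x := by
    show domNumOn G (V1 \ {x}) < domNumOn G V1; omega
  have xcrit2 : IsCritVertexOn G V2 x := by
    show domNumOn G (V2 \ {x}) < domNumOn G V2; omega
  -- claims
  have CC1 : ∀ y ∈ V1, y ≠ x → domNumOn G (Set.univ \ {y}) < domNumOn G Set.univ →
      domNumOn G (V1 \ {y}) < domNumOn G V1 :=
    fun y hy hyx h => claimC1 hunion hinter hsep hy hyx hg2 h
  have CC2 : ∀ z ∈ V2, z ≠ x → domNumOn G (Set.univ \ {z}) < domNumOn G Set.univ →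
      domNumOn G (V2 \ {z}) < domNumOn G V2 :=
    fun z hz hzx h => claimC1 hunion2 hinter2 hsep2 hz hzx (by omega) h
  have NC1 : ∀ y ∈ V1, y ≠ x → ¬ (domNumOn G (V1 \ {y}) < domNumOn G V1) →
      domNumOn G (Set.univ \ {y}) = domNumOn G Set.univ := by
    intro y hy hyx hn
    by_contra hne
    exact hn (CC1 y hy hyx (lt_of_le_of_ne (hwb.1 y (mem_univ y)) hne))
  have NC2 : ∀ z ∈ V2, z ≠ x → ¬ (domNumOn G (V2 \ {z}) < domNumOn G V2) →
      domNumOn G (Set.univ \ {z}) = domNumOn G Set.univ := by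
    intro z hz hzx hn
    by_contra hne
    exact hn (CC2 z hz hzx (lt_of_le_of_ne (hwb.1 z (mem_univ z)) hne))
  have B1 : ∀ y ∈ V1, y ≠ x → domNumOn G (Set.univ \ {y}) = domNumOn G Set.univ →
      domNumOn G ((V1 \ {y}) \ {x}) + 1 ≤ domNumOn G V1 := by
    intro y hy hyx h
    have hcrit := hwb.2 y (mem_univ y) h
    have hxm' : x ∈ (Set.univ \ {y} : Set V) := ⟨mem_univ x, fun hh => hyx (mem_singleton_iff.1 hh).symm⟩
    have hlt : domNumOn G ((Set.univ \ {y} : Set V) \ {x}) < domNumOn G (Set.univ \ {y}) :=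
      hcrit x hxm'
    have hxn : x ∉ (V1 \ {y}) \ {x} := fun hh => hh.2 rfl
    have hld : domNumOn G ((V1 \ {y}) \ {x}) + domNumOn G (V2 \ {x}) ≤
        domNumOn G ((Set.univ \ {y} : Set V) \ {x}) := by
      have := lemD hinter hsep (A := (V1 \ {y}) \ {x}) (B := V2 \ {x})
        (diff_subset.trans diff_subset) diff_subset hxn hxnV2
      rwa [← idAx y hy hyx] at this
    omega
  have B2 : ∀ z ∈ V2, z ≠ x → domNumOn G (Set.univ \ {z}) = domNumOn G Set.univ →
      domNumOn G ((V2 \ {z}) \ {x}) + 1 ≤ domNumOn G V2 := by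
    intro z hz hzx h
    have hcrit := hwb.2 z (mem_univ z) h
    have hxm' : x ∈ (Set.univ \ {z} : Set V) := ⟨mem_univ x, fun hh => hzx (mem_singleton_iff.1 hh).symm⟩
    have hlt : domNumOn G ((Set.univ \ {z} : Set V) \ {x}) < domNumOn G (Set.univ \ {z}) :=
      hcrit x hxm'
    have hxn : x ∉ (V2 \ {z}) \ {x} := fun hh => hh.2 rfl
    have hld : domNumOn G (V1 \ {x}) + domNumOn G ((V2 \ {z}) \ {x}) ≤
        domNumOn G ((Set.univ \ {z} : Set V) \ {x}) := by
      have := lemD hinter hsep (A := V1 \ {x}) (B := (V2 \ {z}) \ {x})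
        diff_subset (diff_subset.trans diff_subset) hxnV1 hxn
      rwa [← idBx z hz hzx] at this
    omega
  by_cases hcr1 : CriticalOn G V1
  · by_cases hcr2 : CriticalOn G V2
    · exact Or.inl ⟨hcr1, critToWB hcr2, xcrit2⟩
    · -- V2 not critical; show V2 weak bicritical
      have part1 : ∀ z ∈ V2, domNumOn G (V2 \ {z}) ≤ domNumOn G V2 := by
        intro z hz
        by_cases hzx : z = x
        · subst hzx; omega
        by_cases hltz : domNumOn G (Set.univ \ {z}) < domNumOn G Set.univ
        · exact le_of_lt (CC2 z hz hzx hltz)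
        · have heq := le_antisymm (hwb.1 z (mem_univ z)) (not_lt.1 hltz)
          have hB := B2 z hz hzx heq
          have hxmz : x ∈ V2 \ {z} := ⟨hx2V, fun hh => hzx (mem_singleton_iff.1 hh).symm⟩
          have hdel := lemDel G (V2 \ {z}) hxmz
          omega
      have part2 : ∀ z ∈ V2, domNumOn G (V2 \ {z}) = domNumOn G V2 →
          CriticalOn G (V2 \ {z}) := by
        intro z hz heqz
        have hzx : z ≠ x := by intro h; rw [h] at heqz; omega
        have hg0 : domNumOn G (Set.univ \ {z}) = domNumOn G Set.univ :=
          NC2 z hz hzx (by omega)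
        have hcritG := hwb.2 z (mem_univ z) hg0
        intro w hw
        by_cases hwx : w = x
        · have hB := B2 z hz hzx hg0
          show domNumOn G ((V2 \ {z}) \ {w}) < domNumOn G (V2 \ {z})
          rw [hwx]
          omega
        · have hwm : w ∈ (Set.univ \ {z} : Set V) := ⟨mem_univ w, hw.2⟩
          have hwl : domNumOn G ((Set.univ \ {z} : Set V) \ {w}) < domNumOn G (Set.univ \ {z}) :=
            hcritG w hwm
          have hxmB : x ∈ (V2 \ {z}) \ {w} :=
            ⟨⟨hx2V, fun hh => hzx (mem_singleton_iff.1 hh).symm⟩,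
              fun hh => hwx (mem_singleton_iff.1 hh).symm⟩
          have hll : domNumOn G V1 + domNumOn G ((V2 \ {z}) \ {w}) ≤
              domNumOn G ((Set.univ \ {z} : Set V) \ {w}) + 1 := by
            have := lemL hinter hsep (A := V1) (B := (V2 \ {z}) \ {w}) subset_rfl
              ((diff_subset.trans diff_subset)) hx1V hxmB
            rwa [← idBw z hz hzx w hw.1 hwx] at this
          show domNumOn G ((V2 \ {z}) \ {w}) < domNumOn G (V2 \ {z})
          omega
      exact Or.inl ⟨hcr1, ⟨part1, part2⟩, xcrit2⟩
  · -- V1 not critical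
    unfold CriticalOn at hcr1
    push_neg at hcr1
    obtain ⟨y₀, hy₀V, hy₀n⟩ := hcr1
    have hy₀a : ¬ (domNumOn G (V1 \ {y₀}) < domNumOn G V1) := hy₀n
    have hy₀x : y₀ ≠ x := fun h => hy₀n (h ▸ xcrit1)
    have Hcrit2 : CriticalOn G V2 := by
      intro z hz
      by_cases hzx : z = x
      · rw [hzx]; exact xcrit2
      by_cases hltz : domNumOn G (Set.univ \ {z}) < domNumOn G Set.univ
      · exact CC2 z hz hzx hltz
      · have heq := le_antisymm (hwb.1 z (mem_univ z)) (not_lt.1 hltz)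
        have hcritG := hwb.2 z (mem_univ z) heq
        have hy₀z : y₀ ∉ ({z} : Set V) := fun h =>
          (hnotin2 y₀ hy₀V hy₀x) ((mem_singleton_iff.1 h) ▸ hz)
        have hwl : domNumOn G ((Set.univ \ {z} : Set V) \ {y₀}) < domNumOn G (Set.univ \ {z}) :=
          hcritG y₀ ⟨mem_univ y₀, hy₀z⟩
        have hxA : x ∈ V1 \ {y₀} := ⟨hx1V, fun hh => hy₀x (mem_singleton_iff.1 hh).symm⟩
        have hxB : x ∈ V2 \ {z} := ⟨hx2V, fun hh => hzx (mem_singleton_iff.1 hh).symm⟩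
        have hll : domNumOn G (V1 \ {y₀}) + domNumOn G (V2 \ {z}) ≤
            domNumOn G ((Set.univ \ {z} : Set V) \ {y₀}) + 1 := by
          have := lemL hinter hsep (A := V1 \ {y₀}) (B := V2 \ {z}) diff_subset diff_subset hxA hxB
          rwa [← idAB y₀ hy₀V hy₀x z hz hzx] at this
        show domNumOn G (V2 \ {z}) < domNumOn G V2
        omega
    have part1 : ∀ y ∈ V1, domNumOn G (V1 \ {y}) ≤ domNumOn G V1 := by
      intro y hy
      by_cases hyx : y = x
      · subst hyx; omega
      by_cases hlty : domNumOn G (Set.univ \ {y}) < domNumOn G Set.univ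
      · exact le_of_lt (CC1 y hy hyx hlty)
      · have heq := le_antisymm (hwb.1 y (mem_univ y)) (not_lt.1 hlty)
        have hB := B1 y hy hyx heq
        have hxmy : x ∈ V1 \ {y} := ⟨hx1V, fun hh => hyx (mem_singleton_iff.1 hh).symm⟩
        have hdel := lemDel G (V1 \ {y}) hxmy
        omega
    have part2 : ∀ y ∈ V1, domNumOn G (V1 \ {y}) = domNumOn G V1 →
        CriticalOn G (V1 \ {y}) := by
      intro y hy heqy
      have hyx : y ≠ x := by intro h; rw [h] at heqy; omega
      have hg0 : domNumOn G (Set.univ \ {y}) = domNumOn G Set.univ :=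
        NC1 y hy hyx (by omega)
      have hcritG := hwb.2 y (mem_univ y) hg0
      intro w hw
      by_cases hwx : w = x
      · have hB := B1 y hy hyx hg0
        show domNumOn G ((V1 \ {y}) \ {w}) < domNumOn G (V1 \ {y})
        rw [hwx]
        omega
      · have hwm : w ∈ (Set.univ \ {y} : Set V) := ⟨mem_univ w, hw.2⟩
        have hwl : domNumOn G ((Set.univ \ {y} : Set V) \ {w}) < domNumOn G (Set.univ \ {y}) :=
          hcritG w hwm
        have hxmA : x ∈ (V1 \ {y}) \ {w} :=
          ⟨⟨hx1V, fun hh => hyx (mem_singleton_iff.1 hh).symm⟩,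
            fun hh => hwx (mem_singleton_iff.1 hh).symm⟩
        have hll : domNumOn G ((V1 \ {y}) \ {w}) + domNumOn G V2 ≤
            domNumOn G ((Set.univ \ {y} : Set V) \ {w}) + 1 := by
          have := lemL hinter hsep (A := (V1 \ {y}) \ {w}) (B := V2)
            (diff_subset.trans diff_subset) subset_rfl hxmA hx2V
          rwa [← idAw y hy hyx w hw.1 hwx] at this
        show domNumOn G ((V1 \ {y}) \ {w}) < domNumOn G (V1 \ {y})
        omega
    exact Or.inr ⟨Hcrit2, ⟨part1, part2⟩, xcrit1⟩
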